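/- arXiv:1510.08240 — 2 statements merged into one kernel-verified Lean document; each statement's English description precedes it below -/
import Mathlib

section
/- If g : ℤ/Lℤ → ℂ is a window with K_g := (1/b)·min over t ∈ {0,…,M−1} of ∑_{k=0}^{b−1} |g[t+kM]|² > 0, where L = Mb, then for every x ∈ ℂ^M, with h[t] := (1/L)·(∑_{m=0}^{M−1} x[m] e^{2πi m t/M}) g[t], one has L·‖h‖² ≥ (1/b)·min_{u∈{0,…,M−1}} (∑_{k=0}^{b−1} |g[u−kM]|²) · ‖x‖². -/
open Complex
open Finset


lemma sum_exp_orth (M : ℕ) (hM : 0 < M) (m n : Fin M) :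
    ∑ u ∈ Finset.range M,
      Complex.exp (2 * Real.pi * I * m * u / M) *
        (starRingEnd ℂ) (Complex.exp (2 * Real.pi * I * n * u / M)) =
      if m = n then (M : ℂ) else 0 := by
  have hMC : (M : ℂ) ≠ 0 := Nat.cast_ne_zero.2 hM.ne'
  set ζ : ℂ := Complex.exp (2 * Real.pi * I * ((m : ℂ) - n) / M) with hζ
  have hterm : ∀ u ∈ Finset.range M,
      Complex.exp (2 * Real.pi * I * m * u / M) *
        (starRingEnd ℂ) (Complex.exp (2 * Real.pi * I * n * u / M)) = ζ ^ u := by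
    intro u _
    rw [← Complex.exp_conj, ← Complex.exp_add, ← Complex.exp_nat_mul]
    congr 1
    have : (starRingEnd ℂ) (2 * Real.pi * I * n * u / M) = -(2 * Real.pi * I * n * u / M) := by
      simp [map_div₀, map_mul, Complex.conj_ofNat]
      ring
    rw [this]
    ring
  rw [Finset.sum_congr rfl hterm]
  rcases eq_or_ne m n with h | h
  · subst h
    simp [hζ]
  · have hζM : ζ ^ M = 1 := by
      rw [← Complex.exp_nat_mul]
      have h1 : (M : ℂ) * (2 * Real.pi * I * ((m : ℂ) - n) / M)
          = (((m : ℤ) - n : ℤ) : ℂ) * (2 * Real.pi * I) := by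
        push_cast
        field_simp
      rw [h1, Complex.exp_int_mul_two_pi_mul_I]
    have hζ1 : ζ ≠ 1 := by
      intro h1
      rw [hζ, Complex.exp_eq_one_iff] at h1
      obtain ⟨k, hk⟩ := h1
      have hd : ((m : ℂ) - n) = k * M := by
        have h2 : 2 * (Real.pi : ℂ) * I ≠ 0 := by
          simp [Real.pi_ne_zero, Complex.I_ne_zero]
        apply mul_left_cancel₀ h2
        field_simp at hk
        linear_combination (2 * (Real.pi : ℂ) * I) * hk
      have hdz : ((m : ℤ) - n : ℤ) = k * M := by
        have : ((((m : ℤ) - n : ℤ)) : ℂ) = (((k * M : ℤ)) : ℂ) := by push_cast; linear_combination hd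
        exact_mod_cast this
      have hdvd : (M : ℤ) ∣ ((m : ℤ) - n) := ⟨k, by linarith [hdz]⟩
      have habs : |((m : ℤ) - n)| < M := by
        rw [abs_sub_lt_iff]
        have := m.isLt; have := n.isLt
        constructor <;> · push_cast; omega
      have := Int.eq_zero_of_abs_lt_dvd hdvd habs
      exact h (Fin.ext (by omega))
    rw [geom_sum_eq hζ1, hζM]
    simp [h]

lemma parseval' (M : ℕ) (hM : 0 < M) (x : Fin M → ℂ) :
    ∑ u ∈ Finset.range M,
      ‖∑ m : Fin M, x m * Complex.exp (2 * Real.pi * I * m * u / M)‖ ^ 2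
    = M * ∑ m : Fin M, ‖x m‖ ^ 2 := by
  have key : ∑ u ∈ Finset.range M,
      ((∑ m : Fin M, x m * Complex.exp (2 * Real.pi * I * m * u / M)) *
        (starRingEnd ℂ) (∑ n : Fin M, x n * Complex.exp (2 * Real.pi * I * n * u / M)))
      = (M : ℂ) * ∑ m : Fin M, x m * (starRingEnd ℂ) (x m) := by
    have step1 : ∀ u ∈ Finset.range M,
        ((∑ m : Fin M, x m * Complex.exp (2 * Real.pi * I * m * u / M)) *
          (starRingEnd ℂ) (∑ n : Fin M, x n * Complex.exp (2 * Real.pi * I * n * u / M)))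
        = ∑ m : Fin M, ∑ n : Fin M, (x m * (starRingEnd ℂ) (x n)) *
            (Complex.exp (2 * Real.pi * I * m * u / M) *
              (starRingEnd ℂ) (Complex.exp (2 * Real.pi * I * n * u / M))) := by
      intro u _
      rw [map_sum, Finset.sum_mul_sum]
      refine Finset.sum_congr rfl fun m _ => Finset.sum_congr rfl fun n _ => ?_
      rw [map_mul]; ring
    rw [Finset.sum_congr rfl step1, Finset.sum_comm]
    have step2 : ∀ m : Fin M,
        ∑ u ∈ Finset.range M, ∑ n : Fin M, (x m * (starRingEnd ℂ) (x n)) *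
            (Complex.exp (2 * Real.pi * I * m * u / M) *
              (starRingEnd ℂ) (Complex.exp (2 * Real.pi * I * n * u / M)))
        = x m * (starRingEnd ℂ) (x m) * M := by
      intro m
      rw [Finset.sum_comm]
      have : ∀ n : Fin M, ∑ u ∈ Finset.range M, (x m * (starRingEnd ℂ) (x n)) *
            (Complex.exp (2 * Real.pi * I * m * u / M) *
              (starRingEnd ℂ) (Complex.exp (2 * Real.pi * I * n * u / M)))
          = (x m * (starRingEnd ℂ) (x n)) * (if m = n then (M : ℂ) else 0) := by
        intro n
        rw [← Finset.mul_sum, sum_exp_orth M hM]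
      rw [Finset.sum_congr rfl fun n _ => this n]
      simp
    rw [Finset.sum_congr rfl fun m _ => step2 m, ← Finset.sum_mul]
    ring
  simp_rw [Complex.mul_conj'] at key
  have : ((∑ u ∈ Finset.range M,
      ‖∑ m : Fin M, x m * Complex.exp (2 * Real.pi * I * m * u / M)‖ ^ 2 : ℝ) : ℂ)
      = ((M * ∑ m : Fin M, ‖x m‖ ^ 2 : ℝ) : ℂ) := by
    push_cast
    exact key
  exact_mod_cast this

lemma Fc_per (M : ℕ) (hM : 0 < M) (x : Fin M → ℂ) (u k : ℕ) :
    (∑ m : Fin M, x m * Complex.exp (2 * Real.pi * I * m * ((u + k * M : ℕ) : ℂ) / M))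
    = ∑ m : Fin M, x m * Complex.exp (2 * Real.pi * I * m * (u : ℂ) / M) := by
  have hMC : (M : ℂ) ≠ 0 := Nat.cast_ne_zero.2 hM.ne'
  refine Finset.sum_congr rfl fun m _ => ?_
  congr 1
  have harg : (2 * Real.pi * I * m * ((u + k * M : ℕ) : ℂ) / M)
      = 2 * Real.pi * I * m * (u : ℂ) / M + (((m : ℕ) * k : ℤ) : ℂ) * (2 * Real.pi * I) := by
    push_cast
    field_simp
  rw [harg, Complex.exp_add, Complex.exp_int_mul_two_pi_mul_I, mul_one]

/-- Key periodization estimate: if the window `g : ℤ/Lℤ → ℂ` satisfies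
`K_g = (1/b) min_t ∑_k |g[t+kM]|² > 0`, then for `h[t] = (1/L)(∑_m x[m] e^{2πimt/M}) g[t]`,
`L‖h‖² ≥ (1/b) min_u (∑_k |g[u−kM]|²) ‖x‖²`. -/
theorem gabor_periodization_estimate (L M b : ℕ) [NeZero L] (hM : 0 < M) (hb : 0 < b)
    (hL : L = M * b) (g : ZMod L → ℂ)
    (hKg : 0 < (1 / (b : ℝ)) * Finset.univ.inf'
        (⟨⟨0, hM⟩, Finset.mem_univ _⟩ : (Finset.univ : Finset (Fin M)).Nonempty)
        (fun t : Fin M => ∑ k : Fin b, ‖g (((t : ℕ) : ZMod L) + ((k : ℕ) : ZMod L) * (M : ZMod L))‖ ^ 2))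
    (x : Fin M → ℂ)
    (h : ZMod L → ℂ)
    (hh : ∀ t : ZMod L, h t = (1 / (L : ℂ)) *
        (∑ m : Fin M, x m * Complex.exp (2 * Real.pi * I * m * (t.val : ℂ) / M)) * g t) :
    (L : ℝ) * ∑ t : ZMod L, ‖h t‖ ^ 2
      ≥ (1 / (b : ℝ)) * Finset.univ.inf'
          (⟨⟨0, hM⟩, Finset.mem_univ _⟩ : (Finset.univ : Finset (Fin M)).Nonempty)
          (fun u : Fin M => ∑ k : Fin b,
            ‖g (((u : ℕ) : ZMod L) - ((k : ℕ) : ZMod L) * (M : ZMod L))‖ ^ 2) *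
        ∑ m : Fin M, ‖x m‖ ^ 2 := by
  have hL0 : 0 < L := hL ▸ Nat.mul_pos hM hb
  have hLR : (L : ℝ) ≠ 0 := Nat.cast_ne_zero.2 hL0.ne'
  have hbM : ((b : ℕ) : ZMod L) * (M : ZMod L) = 0 := by
    rw [← Nat.cast_mul, mul_comm, ← hL, ZMod.natCast_self]
  have hmodb : ∀ a : ℕ, ((a % b : ℕ) : ZMod L) * (M : ZMod L) = ((a : ℕ) : ZMod L) * M := by
    intro a
    conv_rhs => rw [← Nat.div_add_mod a b]
    push_cast
    rw [add_mul]
    have : ((b : ℕ) : ZMod L) * ((a / b : ℕ) : ZMod L) * (M : ZMod L)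
        = ((a / b : ℕ) : ZMod L) * (((b : ℕ) : ZMod L) * M) := by ring
    rw [this, hbM, mul_zero, zero_add]
  have hfun : (fun u : Fin M => ∑ k : Fin b,
        ‖g (((u : ℕ) : ZMod L) - ((k : ℕ) : ZMod L) * (M : ZMod L))‖ ^ 2)
      = (fun u : Fin M => ∑ k : Fin b,
        ‖g (((u : ℕ) : ZMod L) + ((k : ℕ) : ZMod L) * (M : ZMod L))‖ ^ 2) := by
    funext u
    refine Finset.sum_nbij' (fun k : Fin b => (⟨(b - k) % b, Nat.mod_lt _ hb⟩ : Fin b))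
      (fun k : Fin b => (⟨(b - k) % b, Nat.mod_lt _ hb⟩ : Fin b))
      (fun _ _ => Finset.mem_univ _) (fun _ _ => Finset.mem_univ _) ?_ ?_ ?_
    · intro k _
      apply Fin.ext
      simp only
      have hk := k.isLt
      rcases Nat.eq_zero_or_pos (k : ℕ) with h0 | h0
      · simp [h0]
      · have h1 : (b - (k : ℕ)) % b = b - k := Nat.mod_eq_of_lt (by omega)
        rw [h1]
        have h2 : b - (b - (k : ℕ)) = k := by omega
        rw [h2, Nat.mod_eq_of_lt hk]
    · intro k _
      apply Fin.ext
      simp only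
      have hk := k.isLt
      rcases Nat.eq_zero_or_pos (k : ℕ) with h0 | h0
      · simp [h0]
      · have h1 : (b - (k : ℕ)) % b = b - k := Nat.mod_eq_of_lt (by omega)
        rw [h1]
        have h2 : b - (b - (k : ℕ)) = k := by omega
        rw [h2, Nat.mod_eq_of_lt hk]
    · intro k _
      congr 2
      have hkb : (k : ℕ) ≤ b := le_of_lt k.isLt
      have hkey : (((b - (k : ℕ)) % b : ℕ) : ZMod L) * (M : ZMod L)
          = -(((k : ℕ) : ZMod L) * M) := by
        rw [hmodb (b - k), Nat.cast_sub hkb, sub_mul, hbM, zero_sub]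
      rw [hkey]
      ring
  rw [hfun]
  set ne1 : (Finset.univ : Finset (Fin M)).Nonempty := ⟨⟨0, hM⟩, Finset.mem_univ _⟩ with hne1
  set c : ℝ := Finset.univ.inf' ne1
      (fun u : Fin M => ∑ k : Fin b,
        ‖g (((u : ℕ) : ZMod L) + ((k : ℕ) : ZMod L) * (M : ZMod L))‖ ^ 2) with hc
  have hlt : ∀ (u : Fin M) (k : Fin b), (u : ℕ) + (k : ℕ) * M < L := by
    intro u k
    have h1 : (k : ℕ) * M ≤ (b - 1) * M := Nat.mul_le_mul_right M (by omega)
    have h3 := u.isLt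
    have hb1 : (b - 1) * M + M = b * M := by
      cases b with
      | zero => omega
      | succ n => simp [Nat.succ_sub_one, Nat.succ_mul]
    have hL' : L = b * M := by rw [hL, mul_comm]
    omega
  have hval : ∀ (u : Fin M) (k : Fin b),
      ((((u : ℕ) : ZMod L) + ((k : ℕ) : ZMod L) * (M : ZMod L))).val
        = (u : ℕ) + (k : ℕ) * M := by
    intro u k
    have h1 : (((u : ℕ) : ZMod L) + ((k : ℕ) : ZMod L) * (M : ZMod L))
        = (((u : ℕ) + (k : ℕ) * M : ℕ) : ZMod L) := by push_cast; ring
    rw [h1, ZMod.val_natCast_of_lt (hlt u k)]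
  have split : ∑ t : ZMod L, ‖h t‖ ^ 2
      = ∑ u : Fin M, ∑ k : Fin b,
          ‖h (((u : ℕ) : ZMod L) + ((k : ℕ) : ZMod L) * (M : ZMod L))‖ ^ 2 := by
    have key : ∑ p : Fin M × Fin b,
        ‖h (((p.1 : ℕ) : ZMod L) + ((p.2 : ℕ) : ZMod L) * (M : ZMod L))‖ ^ 2
        = ∑ t : ZMod L, ‖h t‖ ^ 2 := by
      refine (Finset.sum_nbij'
      (fun p : Fin M × Fin b =>
        (((p.1 : ℕ) : ZMod L) + ((p.2 : ℕ) : ZMod L) * (M : ZMod L)))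
      (fun t : ZMod L =>
        ((⟨t.val % M, Nat.mod_lt _ hM⟩ : Fin M),
         (⟨t.val / M, Nat.div_lt_of_lt_mul (hL ▸ ZMod.val_lt t)⟩ : Fin b)))
        (fun _ _ => Finset.mem_univ _) (fun _ _ => Finset.mem_univ _) ?_ ?_
        (fun p _ => rfl))
      · intro p _
        obtain ⟨u, k⟩ := p
        have hv := hval u k
        refine Prod.ext ?_ ?_
        · apply Fin.ext
          simp only [hv]
          rw [Nat.add_mul_mod_self_right, Nat.mod_eq_of_lt u.isLt]
        · apply Fin.ext
          simp only [hv]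
          rw [mul_comm, Nat.add_mul_div_left _ _ hM, Nat.div_eq_of_lt u.isLt, zero_add]
      · intro t _
        simp only
        have h1 : ((t.val % M : ℕ) : ZMod L) + ((t.val / M : ℕ) : ZMod L) * (M : ZMod L)
            = ((t.val % M + t.val / M * M : ℕ) : ZMod L) := by push_cast; ring
        rw [h1, Nat.mod_add_div']
        exact ZMod.natCast_rightInverse t
    rw [← key, Fintype.sum_prod_type]
  have hterm : ∀ (u : Fin M) (k : Fin b),
      ‖h (((u : ℕ) : ZMod L) + ((k : ℕ) : ZMod L) * (M : ZMod L))‖ ^ 2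
      = (1 / (L : ℝ)) ^ 2 *
          ‖∑ m : Fin M, x m * Complex.exp (2 * Real.pi * I * m * ((u : ℕ) : ℂ) / M)‖ ^ 2 *
          ‖g (((u : ℕ) : ZMod L) + ((k : ℕ) : ZMod L) * (M : ZMod L))‖ ^ 2 := by
    intro u k
    rw [hh, hval u k]
    rw [Fc_per M hM x u k]
    rw [norm_mul, norm_mul, mul_pow, mul_pow]
    congr 2
    simp
  have hsum : ∑ t : ZMod L, ‖h t‖ ^ 2
      = (1 / (L : ℝ)) ^ 2 * ∑ u : Fin M,
          ‖∑ m : Fin M, x m * Complex.exp (2 * Real.pi * I * m * ((u : ℕ) : ℂ) / M)‖ ^ 2 *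
          (∑ k : Fin b, ‖g (((u : ℕ) : ZMod L) + ((k : ℕ) : ZMod L) * (M : ZMod L))‖ ^ 2) := by
    rw [split, Finset.mul_sum]
    refine Finset.sum_congr rfl fun u _ => ?_
    rw [Finset.sum_congr rfl fun k _ => hterm u k]
    rw [← Finset.mul_sum]
    ring
  have hparphi : ∑ u : Fin M,
      ‖∑ m : Fin M, x m * Complex.exp (2 * Real.pi * I * m * ((u : ℕ) : ℂ) / M)‖ ^ 2
      = M * ∑ m : Fin M, ‖x m‖ ^ 2 := by
    rw [← parseval' M hM x]
    exact Fin.sum_univ_eq_sum_range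
      (fun n : ℕ => ‖∑ m : Fin M, x m * Complex.exp (2 * Real.pi * I * m * (n : ℂ) / M)‖ ^ 2) M
  have hbound : c * (M * ∑ m : Fin M, ‖x m‖ ^ 2)
      ≤ ∑ u : Fin M,
          ‖∑ m : Fin M, x m * Complex.exp (2 * Real.pi * I * m * ((u : ℕ) : ℂ) / M)‖ ^ 2 *
          (∑ k : Fin b, ‖g (((u : ℕ) : ZMod L) + ((k : ℕ) : ZMod L) * (M : ZMod L))‖ ^ 2) := by
    have h1 : ∑ u : Fin M,
        ‖∑ m : Fin M, x m * Complex.exp (2 * Real.pi * I * m * ((u : ℕ) : ℂ) / M)‖ ^ 2 * c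
        ≤ ∑ u : Fin M,
          ‖∑ m : Fin M, x m * Complex.exp (2 * Real.pi * I * m * ((u : ℕ) : ℂ) / M)‖ ^ 2 *
          (∑ k : Fin b, ‖g (((u : ℕ) : ZMod L) + ((k : ℕ) : ZMod L) * (M : ZMod L))‖ ^ 2) := by
      refine Finset.sum_le_sum fun u _ => ?_
      exact mul_le_mul_of_nonneg_left (Finset.inf'_le _ (Finset.mem_univ u)) (by positivity)
    calc c * (M * ∑ m : Fin M, ‖x m‖ ^ 2)
        = (∑ u : Fin M,
          ‖∑ m : Fin M, x m * Complex.exp (2 * Real.pi * I * m * ((u : ℕ) : ℂ) / M)‖ ^ 2) * c := by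
          rw [hparphi]; ring
      _ = ∑ u : Fin M,
          ‖∑ m : Fin M, x m * Complex.exp (2 * Real.pi * I * m * ((u : ℕ) : ℂ) / M)‖ ^ 2 * c := by
          rw [Finset.sum_mul]
      _ ≤ _ := h1
  rw [hsum]
  have harith : (L : ℝ) * ((1 / (L : ℝ)) ^ 2 *
      ∑ u : Fin M,
          ‖∑ m : Fin M, x m * Complex.exp (2 * Real.pi * I * m * ((u : ℕ) : ℂ) / M)‖ ^ 2 *
          (∑ k : Fin b, ‖g (((u : ℕ) : ZMod L) + ((k : ℕ) : ZMod L) * (M : ZMod L))‖ ^ 2))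
      = (1 / (L : ℝ)) *
        ∑ u : Fin M,
          ‖∑ m : Fin M, x m * Complex.exp (2 * Real.pi * I * m * ((u : ℕ) : ℂ) / M)‖ ^ 2 *
          (∑ k : Fin b, ‖g (((u : ℕ) : ZMod L) + ((k : ℕ) : ZMod L) * (M : ZMod L))‖ ^ 2) := by
    field_simp
  rw [ge_iff_le, harith]
  have hrhs : (1 / (b : ℝ)) * c * ∑ m : Fin M, ‖x m‖ ^ 2
      = (1 / (L : ℝ)) * (c * (M * ∑ m : Fin M, ‖x m‖ ^ 2)) := by
    have hMb : (L : ℝ) = (M : ℝ) * b := by exact_mod_cast congrArg (Nat.cast : ℕ → ℝ) hL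
    have hbR : (b : ℝ) ≠ 0 := Nat.cast_ne_zero.2 hb.ne'
    have hMR : (M : ℝ) ≠ 0 := Nat.cast_ne_zero.2 hM.ne'
    rw [hMb]
    field_simp
  rw [hrhs]
  exact mul_le_mul_of_nonneg_left hbound (by positivity)
end

section
/- Under the assumption K_g := (1/b)·min_{t∈{0,…,M−1}} ∑_{k=0}^{b−1} |g[t+kM]|² > 0, the covariance matrix C_G[m,m'] = ∑_{ν} (S_Z[ν−δ] + σ₀²) · conj(ĝ[ν−mb]) ĝ[ν−m'b] satisfies ⟨C_G x, x⟩ ≥ σ₀² K_g ‖x‖² for all x ∈ ℂ^M, and is therefore invertible. -/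
open Complex ZMod AddChar Finset

variable {L : ℕ} [NeZero L]

lemma gci_orth (t : ZMod L) :
    ∑ i : ZMod L, stdAddChar (t * i) = if t = 0 then (L : ℂ) else 0 := by
  split_ifs with h
  · simp only [h, zero_mul, map_zero_eq_one, sum_const, card_univ, ZMod.card,
      nsmul_eq_mul, mul_one]
  · exact sum_eq_zero_of_ne_one (isPrimitive_stdAddChar L h)

lemma gci_conj (z : ZMod L) :
    (starRingEnd ℂ) (stdAddChar z) = stdAddChar (-z) := by
  have h1 : stdAddChar z * stdAddChar (-z) = 1 := by
    rw [← AddChar.map_add_eq_mul]; simp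
  have h2 : (starRingEnd ℂ) (stdAddChar z) * stdAddChar z = 1 := by
    rw [mul_comm, Complex.mul_conj]
    rw [stdAddChar_apply]
    norm_cast
    simp [Complex.normSq_eq_norm_sq, Circle.norm_coe]
  calc (starRingEnd ℂ) (stdAddChar z)
      = (starRingEnd ℂ) (stdAddChar z) * (stdAddChar z * stdAddChar (-z)) := by rw [h1, mul_one]
    _ = ((starRingEnd ℂ) (stdAddChar z) * stdAddChar z) * stdAddChar (-z) := by ring
    _ = stdAddChar (-z) := by rw [h2, one_mul]

lemma gci_pow (a : ZMod L) (n : ℕ) :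
    stdAddChar (a * ((n : ℕ) : ZMod L)) = stdAddChar a ^ n := by
  rw [mul_comm, ← nsmul_eq_mul, map_nsmul_eq_pow]

lemma gci_normmul (z : ℂ) : (starRingEnd ℂ) z * z = ((‖z‖^2 : ℝ) : ℂ) := by
  rw [mul_comm, Complex.mul_conj, Complex.normSq_eq_norm_sq]

/-- Lower bound and invertibility of the Gabor covariance matrix
`C_G[m,m'] = ∑_ν (S_Z[ν−δ]+σ₀²) conj(ĝ[ν−mb]) ĝ[ν−m'b]` under the condition `K_g > 0`. -/
theorem gabor_covariance_invertible (L M b : ℕ) [NeZero L] (hM : 0 < M) (hb : 0 < b)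
    (hL : L = M * b) (g : ZMod L → ℂ)
    (ghat : ZMod L → ℂ)
    (hghat : ∀ ν : ZMod L, ghat ν = ∑ t : ZMod L,
        g t * Complex.exp (-(2 * Real.pi * I * (ν.val : ℂ) * (t.val : ℂ) / L)))
    (Kg : ℝ)
    (hKgdef : Kg = (1 / (b : ℝ)) * Finset.univ.inf'
        (⟨⟨0, hM⟩, Finset.mem_univ _⟩ : (Finset.univ : Finset (Fin M)).Nonempty)
        (fun t : Fin M => ∑ k : Fin b,
          ‖g (((t : ℕ) : ZMod L) + ((k : ℕ) : ZMod L) * (M : ZMod L))‖ ^ 2))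
    (hKg : 0 < Kg)
    (S : ZMod L → ℝ) (hS : ∀ ν, 0 ≤ S ν) (δ : ZMod L) (σ₀ : ℝ) (hσ₀ : 0 < σ₀)
    (CG : Matrix (Fin M) (Fin M) ℂ)
    (hCG : ∀ m m' : Fin M, CG m m' = ∑ ν : ZMod L,
        ((S (ν - δ) : ℂ) + (σ₀ : ℂ) ^ 2) *
          (starRingEnd ℂ) (ghat (ν - ((m : ℕ) : ZMod L) * (b : ZMod L))) *
          ghat (ν - ((m' : ℕ) : ZMod L) * (b : ZMod L))) :
    (∀ x : Fin M → ℂ,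
        (dotProduct (star x) (CG.mulVec x)).re ≥ σ₀ ^ 2 * Kg * ∑ m, ‖x m‖ ^ 2) ∧
      IsUnit CG := by
  classical
  have hMb0 : (M : ZMod L) * (b : ZMod L) = 0 := by
    have : ((M * b : ℕ) : ZMod L) = 0 := by rw [← hL]; exact ZMod.natCast_self L
    push_cast at this; exact this
  -- ghat is the DFT of g w.r.t. the standard character
  have hghat' : ∀ ν : ZMod L, ghat ν = ∑ t : ZMod L, g t * stdAddChar (-(ν * t)) := by
    intro ν
    rw [hghat ν]
    refine Finset.sum_congr rfl fun t _ => ?_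
    congr 1
    have h1 : (-(ν * t) : ZMod L) = ((-((ν.val : ℤ) * (t.val : ℤ)) : ℤ) : ZMod L) := by
      push_cast
      rw [ZMod.natCast_val, ZMod.natCast_val]
      simp [ZMod.cast_id]
    rw [h1, ZMod.stdAddChar_coe]
    congr 1
    push_cast
    ring
  -- the key lower bound
  have key : ∀ x : Fin M → ℂ,
      (dotProduct (star x) (CG.mulVec x)).re ≥
        σ₀ ^ 2 * ((L : ℝ) * (b * Kg * ((M : ℝ) * ∑ m, ‖x m‖ ^ 2))) := by
    intro x
    set A : ZMod L → ℂ := fun ν => (S (ν - δ) : ℂ) + (σ₀ : ℂ)^2 with hA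
    set F : ZMod L → ℂ := fun ν =>
      ∑ m : Fin M, x m * ghat (ν - ((m : ℕ) : ZMod L) * (b : ZMod L)) with hFdef
    have hQ : dotProduct (star x) (CG.mulVec x)
        = ∑ ν : ZMod L, A ν * ((starRingEnd ℂ) (F ν) * F ν) := by
      have e1 : ∀ (f : Fin M → Fin M → ZMod L → ℂ),
          ∑ m, ∑ m', ∑ ν, f m m' ν = ∑ ν, ∑ m, ∑ m', f m m' ν := by
        intro f
        calc ∑ m, ∑ m', ∑ ν, f m m' ν
            = ∑ m, ∑ ν, ∑ m', f m m' ν :=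
              Finset.sum_congr rfl fun m _ => Finset.sum_comm
          _ = ∑ ν, ∑ m, ∑ m', f m m' ν := Finset.sum_comm
      calc dotProduct (star x) (CG.mulVec x)
          = ∑ m : Fin M, ∑ m' : Fin M, ∑ ν : ZMod L, (starRingEnd ℂ) (x m) *
              (A ν * (starRingEnd ℂ) (ghat (ν - ((m : ℕ) : ZMod L) * (b : ZMod L))) *
                ghat (ν - ((m' : ℕ) : ZMod L) * (b : ZMod L)) * x m') := by
            simp only [dotProduct, Matrix.mulVec, Pi.star_apply, hCG,
              Finset.sum_mul, Finset.mul_sum, Complex.star_def]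
            rfl
        _ = ∑ ν : ZMod L, ∑ m : Fin M, ∑ m' : Fin M, (starRingEnd ℂ) (x m) *
              (A ν * (starRingEnd ℂ) (ghat (ν - ((m : ℕ) : ZMod L) * (b : ZMod L))) *
                ghat (ν - ((m' : ℕ) : ZMod L) * (b : ZMod L)) * x m') := e1 _
        _ = ∑ ν : ZMod L, A ν * ((starRingEnd ℂ) (F ν) * F ν) := by
            refine Finset.sum_congr rfl fun ν _ => ?_
            simp only [hFdef, map_sum, map_mul, Finset.sum_mul, Finset.mul_sum]
            rw [Finset.sum_comm]
            refine Finset.sum_congr rfl fun m _ => Finset.sum_congr rfl fun m' _ => by ring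
    -- real part and first lower bound
    have hQre : (dotProduct (star x) (CG.mulVec x)).re
        = ∑ ν : ZMod L, (S (ν - δ) + σ₀^2) * ‖F ν‖^2 := by
      rw [hQ, Complex.re_sum]
      refine Finset.sum_congr rfl fun ν _ => ?_
      rw [gci_normmul (F ν)]
      have : A ν = ((S (ν - δ) + σ₀^2 : ℝ) : ℂ) := by simp only [hA]; push_cast; ring
      rw [this, ← Complex.ofReal_mul, Complex.ofReal_re]
    have hlb1 : (dotProduct (star x) (CG.mulVec x)).re
        ≥ σ₀^2 * ∑ ν : ZMod L, ‖F ν‖^2 := by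
      rw [hQre, Finset.mul_sum]
      refine Finset.sum_le_sum fun ν _ => ?_
      have h1 := hS (ν - δ)
      nlinarith [sq_nonneg ‖F ν‖]
    -- F is the DFT of g * X
    set X : ZMod L → ℂ := fun t =>
      ∑ m : Fin M, x m * stdAddChar (((m : ℕ) : ZMod L) * (b : ZMod L) * t) with hXdef
    have hF : ∀ ν : ZMod L, F ν = ∑ t : ZMod L, (g t * X t) * stdAddChar (-(t * ν)) := by
      intro ν
      simp only [hFdef, hXdef]
      simp only [hghat', Finset.mul_sum, Finset.sum_mul]
      rw [Finset.sum_comm]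
      refine Finset.sum_congr rfl fun t _ => Finset.sum_congr rfl fun m _ => ?_
      rw [show (-((ν - ((m : ℕ) : ZMod L) * (b : ZMod L)) * t))
          = ((m : ℕ) : ZMod L) * (b : ZMod L) * t + -(t * ν) by ring,
        AddChar.map_add_eq_mul]
      ring
    -- swap lemma for ZMod sums
    have e2 : ∀ (f : ZMod L → ZMod L → ZMod L → ℂ),
        ∑ ν : ZMod L, ∑ t : ZMod L, ∑ t' : ZMod L, f t t' ν
          = ∑ t : ZMod L, ∑ t' : ZMod L, ∑ ν : ZMod L, f t t' ν := by
      intro f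
      calc ∑ ν : ZMod L, ∑ t : ZMod L, ∑ t' : ZMod L, f t t' ν
          = ∑ t : ZMod L, ∑ ν : ZMod L, ∑ t' : ZMod L, f t t' ν := Finset.sum_comm
        _ = ∑ t : ZMod L, ∑ t' : ZMod L, ∑ ν : ZMod L, f t t' ν :=
            Finset.sum_congr rfl fun t _ => Finset.sum_comm
    -- Parseval on ZMod L
    have hPar1C : ∑ ν : ZMod L, ((‖F ν‖^2 : ℝ) : ℂ)
        = (L : ℂ) * ∑ t : ZMod L, ((‖g t * X t‖^2 : ℝ) : ℂ) := by
      calc ∑ ν : ZMod L, ((‖F ν‖^2 : ℝ) : ℂ)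
          = ∑ ν : ZMod L, (starRingEnd ℂ) (F ν) * F ν :=
            Finset.sum_congr rfl fun ν _ => (gci_normmul _).symm
        _ = ∑ ν : ZMod L, ∑ t : ZMod L, ∑ t' : ZMod L,
              ((starRingEnd ℂ) (g t * X t) * stdAddChar (t * ν)) *
                ((g t' * X t') * stdAddChar (-(t' * ν))) := by
            refine Finset.sum_congr rfl fun ν _ => ?_
            rw [hF ν]
            rw [map_sum, Finset.sum_mul]
            refine Finset.sum_congr rfl fun t _ => ?_
            rw [Finset.mul_sum]
            refine Finset.sum_congr rfl fun t' _ => ?_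
            rw [map_mul, gci_conj, neg_neg]
        _ = ∑ t : ZMod L, ∑ t' : ZMod L,
              ((starRingEnd ℂ) (g t * X t) * (g t' * X t')) *
                ∑ ν : ZMod L, stdAddChar ((t - t') * ν) := by
            rw [e2 (fun t t' ν => ((starRingEnd ℂ) (g t * X t) * stdAddChar (t * ν)) *
              ((g t' * X t') * stdAddChar (-(t' * ν))))]
            refine Finset.sum_congr rfl fun t _ => Finset.sum_congr rfl fun t' _ => ?_
            conv_rhs => rw [Finset.mul_sum]
            refine Fintype.sum_congr _ _ fun ν => ?_
            rw [show ((t - t') * ν : ZMod L) = t * ν + -(t' * ν) by ring,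
              AddChar.map_add_eq_mul]
            ring
        _ = ∑ t : ZMod L, ((starRingEnd ℂ) (g t * X t) * (g t * X t)) * (L : ℂ) := by
            refine Finset.sum_congr rfl fun t _ => ?_
            have hone : ∀ t' : ZMod L,
                (∑ ν : ZMod L, stdAddChar ((t - t') * ν)) = if t' = t then (L : ℂ) else 0 := by
              intro t'
              rw [gci_orth]
              simp [sub_eq_zero, eq_comm]
            simp only [hone, mul_ite, mul_zero]
            rw [Finset.sum_ite_eq' Finset.univ t
              (fun t' => (starRingEnd ℂ) (g t * X t) * (g t' * X t') * (L : ℂ))]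
            simp
        _ = (L : ℂ) * ∑ t : ZMod L, ((‖g t * X t‖^2 : ℝ) : ℂ) := by
            rw [Finset.mul_sum]
            refine Finset.sum_congr rfl fun t _ => ?_
            rw [gci_normmul]
            ring
    have hPar1 : ∑ ν : ZMod L, ‖F ν‖^2 = (L : ℝ) * ∑ t : ZMod L, ‖g t * X t‖^2 := by
      exact_mod_cast hPar1C
    -- reindex t = r + k*M
    set φ : Fin M × Fin b → ZMod L := fun p =>
      ((p.1 : ℕ) : ZMod L) + ((p.2 : ℕ) : ZMod L) * (M : ZMod L) with hφdef
    have hφcast : ∀ p : Fin M × Fin b, φ p = (((p.1 : ℕ) + (p.2 : ℕ) * M : ℕ) : ZMod L) := by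
      intro p; simp only [hφdef]; push_cast; ring
    have hφlt : ∀ p : Fin M × Fin b, (p.1 : ℕ) + (p.2 : ℕ) * M < L := by
      rintro ⟨r, k⟩
      rw [hL]
      calc (r : ℕ) + (k : ℕ) * M < M + (k : ℕ) * M := by omega
        _ = ((k : ℕ) + 1) * M := by ring
        _ ≤ b * M := Nat.mul_le_mul_right M k.2
        _ = M * b := Nat.mul_comm b M
    have hφval : ∀ p : Fin M × Fin b, (φ p).val = (p.1 : ℕ) + (p.2 : ℕ) * M := by
      intro p
      rw [hφcast p]
      exact ZMod.val_cast_of_lt (hφlt p)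
    have hφbij : Function.Bijective φ := by
      refine (Fintype.bijective_iff_injective_and_card φ).2 ⟨?_, by simp [ZMod.card, hL]⟩
      intro p q hpq
      have h1 : (p.1 : ℕ) + (p.2 : ℕ) * M = (q.1 : ℕ) + (q.2 : ℕ) * M := by
        rw [← hφval p, ← hφval q, hpq]
      have h2 : (p.1 : ℕ) = (q.1 : ℕ) := by
        have := congrArg (· % M) h1
        simpa [Nat.add_mul_mod_self_right, Nat.mod_eq_of_lt p.1.2, Nat.mod_eq_of_lt q.1.2]
          using this
      have h3 : (p.2 : ℕ) = (q.2 : ℕ) := by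
        have h4 : (p.2 : ℕ) * M = (q.2 : ℕ) * M := by omega
        exact Nat.eq_of_mul_eq_mul_right hM h4
      exact Prod.ext (Fin.ext h2) (Fin.ext h3)
    -- X is M-periodic
    have hXper : ∀ p : Fin M × Fin b, X (φ p) = X ((p.1 : ℕ) : ZMod L) := by
      rintro ⟨r, k⟩
      simp only [hXdef, hφdef]
      refine Fintype.sum_congr _ _ fun m => ?_
      congr 2
      linear_combination (((m : ℕ) : ZMod L) * ((k : ℕ) : ZMod L)) * hMb0
    have hsum3 : ∑ t : ZMod L, ‖g t * X t‖^2
        = ∑ r : Fin M, ∑ k : Fin b, ‖g (φ (r, k))‖^2 * ‖X ((r : ℕ) : ZMod L)‖^2 := by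
      have h0 : ∑ t : ZMod L, ‖g t * X t‖^2
          = ∑ p : Fin M × Fin b, ‖g (φ p)‖^2 * ‖X (((p.1 : ℕ)) : ZMod L)‖^2 :=
        (Fintype.sum_bijective φ hφbij _ _ fun p => by rw [norm_mul, mul_pow, hXper p]).symm
      rw [h0, Fintype.sum_prod_type]
    -- the inf' bound
    have hInf : ∀ r : Fin M, (b : ℝ) * Kg ≤ ∑ k : Fin b, ‖g (φ (r, k))‖^2 := by
      intro r
      have hb0 : (b : ℝ) ≠ 0 := by positivity
      have h1 : (b : ℝ) * Kg = Finset.univ.inf'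
          (⟨⟨0, hM⟩, Finset.mem_univ _⟩ : (Finset.univ : Finset (Fin M)).Nonempty)
          (fun t : Fin M => ∑ k : Fin b,
            ‖g (((t : ℕ) : ZMod L) + ((k : ℕ) : ZMod L) * (M : ZMod L))‖ ^ 2) := by
        rw [hKgdef]; field_simp
      rw [h1]
      exact Finset.inf'_le _ (Finset.mem_univ r)
    have hstep : (b : ℝ) * Kg * ∑ r : Fin M, ‖X ((r : ℕ) : ZMod L)‖^2
        ≤ ∑ t : ZMod L, ‖g t * X t‖^2 := by
      rw [hsum3, Finset.mul_sum]
      refine Finset.sum_le_sum fun r _ => ?_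
      rw [← Finset.sum_mul]
      exact mul_le_mul_of_nonneg_right (hInf r) (sq_nonneg _)
    -- Parseval on Fin M
    have hGeo : ∀ m m' : Fin M,
        ∑ r : Fin M, (starRingEnd ℂ) (stdAddChar (((m : ℕ) : ZMod L) * (b : ZMod L) * ((r : ℕ) : ZMod L)))
            * stdAddChar (((m' : ℕ) : ZMod L) * (b : ZMod L) * ((r : ℕ) : ZMod L))
          = if m' = m then (M : ℂ) else 0 := by
      intro m m'
      set d : ZMod L := ((m' : ℕ) : ZMod L) * (b : ZMod L) - ((m : ℕ) : ZMod L) * (b : ZMod L) with hd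
      have hterm : ∀ r : Fin M,
          (starRingEnd ℂ) (stdAddChar (((m : ℕ) : ZMod L) * (b : ZMod L) * ((r : ℕ) : ZMod L)))
            * stdAddChar (((m' : ℕ) : ZMod L) * (b : ZMod L) * ((r : ℕ) : ZMod L))
          = stdAddChar d ^ (r : ℕ) := by
        intro r
        rw [gci_conj, ← gci_pow]
        rw [← AddChar.map_add_eq_mul]
        congr 1
        simp only [hd]
        ring
      rw [Fintype.sum_congr _ _ hterm]
      by_cases hmm : m' = m
      · subst hmm
        have : d = 0 := by simp only [hd]; ring
        rw [this]
        simp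
      · have hd0 : d ≠ 0 := by
          intro h0
          apply hmm
          have h1 : (((m' : ℕ) * b : ℕ) : ZMod L) = (((m : ℕ) * b : ℕ) : ZMod L) := by
            push_cast
            have h2 := sub_eq_zero.1 h0
            simpa [hd] using h2
          rw [ZMod.natCast_eq_natCast_iff, hL] at h1
          have h2 : (m' : ℕ) ≡ (m : ℕ) [MOD M] :=
            Nat.ModEq.mul_right_cancel' hb.ne' h1
          have h3 : (m' : ℕ) = (m : ℕ) := by
            have h4 : (m' : ℕ) % M = (m : ℕ) % M := h2
            rwa [Nat.mod_eq_of_lt m'.2, Nat.mod_eq_of_lt m.2] at h4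
          exact Fin.ext h3
        have hw : stdAddChar d ≠ 1 := by
          intro hw1
          refine hd0 (injective_stdAddChar ?_)
          rw [hw1, AddChar.map_zero_eq_one]
        have hdM : stdAddChar d ^ M = 1 := by
          rw [← gci_pow]
          have hz : d * ((M : ℕ) : ZMod L) = 0 := by
            simp only [hd]
            linear_combination ((((m' : ℕ) : ZMod L) - ((m : ℕ) : ZMod L))) * hMb0
          rw [hz, AddChar.map_zero_eq_one]
        rw [if_neg hmm]
        rw [Fin.sum_univ_eq_sum_range (fun i => stdAddChar d ^ i) M]
        rw [geom_sum_eq hw M, hdM]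
        simp
    have hPar2C : ∑ r : Fin M, ((‖X ((r : ℕ) : ZMod L)‖^2 : ℝ) : ℂ)
        = (M : ℂ) * ∑ m : Fin M, ((‖x m‖^2 : ℝ) : ℂ) := by
      have e3 : ∀ (f : Fin M → Fin M → Fin M → ℂ),
          ∑ r : Fin M, ∑ m : Fin M, ∑ m' : Fin M, f m m' r
            = ∑ m : Fin M, ∑ m' : Fin M, ∑ r : Fin M, f m m' r := by
        intro f
        calc ∑ r : Fin M, ∑ m : Fin M, ∑ m' : Fin M, f m m' r
            = ∑ m : Fin M, ∑ r : Fin M, ∑ m' : Fin M, f m m' r := Finset.sum_comm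
          _ = ∑ m : Fin M, ∑ m' : Fin M, ∑ r : Fin M, f m m' r :=
              Finset.sum_congr rfl fun m _ => Finset.sum_comm
      calc ∑ r : Fin M, ((‖X ((r : ℕ) : ZMod L)‖^2 : ℝ) : ℂ)
          = ∑ r : Fin M, (starRingEnd ℂ) (X ((r : ℕ) : ZMod L)) * X ((r : ℕ) : ZMod L) :=
            Finset.sum_congr rfl fun r _ => (gci_normmul _).symm
        _ = ∑ r : Fin M, ∑ m : Fin M, ∑ m' : Fin M,
              ((starRingEnd ℂ) (x m) * (starRingEnd ℂ)
                  (stdAddChar (((m : ℕ) : ZMod L) * (b : ZMod L) * ((r : ℕ) : ZMod L)))) *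
                (x m' * stdAddChar (((m' : ℕ) : ZMod L) * (b : ZMod L) * ((r : ℕ) : ZMod L))) := by
            refine Finset.sum_congr rfl fun r _ => ?_
            simp only [hXdef]
            rw [map_sum, Finset.sum_mul]
            refine Finset.sum_congr rfl fun m _ => ?_
            rw [map_mul, Finset.mul_sum]
        _ = ∑ m : Fin M, ∑ m' : Fin M, ((starRingEnd ℂ) (x m) * x m') *
              ∑ r : Fin M, (starRingEnd ℂ)
                  (stdAddChar (((m : ℕ) : ZMod L) * (b : ZMod L) * ((r : ℕ) : ZMod L)))
                * stdAddChar (((m' : ℕ) : ZMod L) * (b : ZMod L) * ((r : ℕ) : ZMod L)) := by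
            rw [e3 (fun m m' r => ((starRingEnd ℂ) (x m) * (starRingEnd ℂ)
                  (stdAddChar (((m : ℕ) : ZMod L) * (b : ZMod L) * ((r : ℕ) : ZMod L)))) *
                (x m' * stdAddChar (((m' : ℕ) : ZMod L) * (b : ZMod L) * ((r : ℕ) : ZMod L))))]
            refine Finset.sum_congr rfl fun m _ => Finset.sum_congr rfl fun m' _ => ?_
            conv_rhs => rw [Finset.mul_sum]
            refine Fintype.sum_congr _ _ fun r => ?_
            ring
        _ = ∑ m : Fin M, ((starRingEnd ℂ) (x m) * x m) * (M : ℂ) := by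
            refine Finset.sum_congr rfl fun m _ => ?_
            simp only [hGeo, mul_ite, mul_zero]
            rw [Finset.sum_ite_eq' Finset.univ m
              (fun m' => (starRingEnd ℂ) (x m) * x m' * (M : ℂ))]
            simp
        _ = (M : ℂ) * ∑ m : Fin M, ((‖x m‖^2 : ℝ) : ℂ) := by
            rw [Finset.mul_sum]
            refine Finset.sum_congr rfl fun m _ => ?_
            rw [gci_normmul]
            ring
    have hPar2 : ∑ r : Fin M, ‖X ((r : ℕ) : ZMod L)‖^2 = (M : ℝ) * ∑ m : Fin M, ‖x m‖^2 := by
      exact_mod_cast hPar2C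
    -- combine everything
    have hchain : (L : ℝ) * ((b : ℝ) * Kg * ((M : ℝ) * ∑ m, ‖x m‖ ^ 2))
        ≤ ∑ ν : ZMod L, ‖F ν‖^2 := by
      rw [hPar1]
      have hL0 : (0 : ℝ) ≤ (L : ℝ) := Nat.cast_nonneg L
      refine mul_le_mul_of_nonneg_left ?_ hL0
      rw [← hPar2]
      exact le_trans (le_of_eq (by ring)) hstep
    calc σ₀ ^ 2 * ((L : ℝ) * ((b : ℝ) * Kg * ((M : ℝ) * ∑ m, ‖x m‖ ^ 2)))
        ≤ σ₀ ^ 2 * ∑ ν : ZMod L, ‖F ν‖^2 :=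
          mul_le_mul_of_nonneg_left hchain (sq_nonneg σ₀)
      _ ≤ (dotProduct (star x) (CG.mulVec x)).re := hlb1


  have main : ∀ x : Fin M → ℂ,
      (dotProduct (star x) (CG.mulVec x)).re ≥ σ₀ ^ 2 * Kg * ∑ m, ‖x m‖ ^ 2 := by
    intro x
    refine le_trans ?_ (key x)
    have hT : (0:ℝ) ≤ ∑ m, ‖x m‖ ^ 2 :=
      Finset.sum_nonneg fun m _ => sq_nonneg _
    have hL1 : (1:ℝ) ≤ (L:ℝ) := by exact_mod_cast Nat.one_le_iff_ne_zero.2 (NeZero.ne L)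
    have hb1 : (1:ℝ) ≤ (b:ℝ) := by exact_mod_cast hb
    have hM1 : (1:ℝ) ≤ (M:ℝ) := by exact_mod_cast hM
    have hσ2 : (0:ℝ) ≤ σ₀^2 := sq_nonneg _
    have hLb : (1:ℝ) ≤ (L:ℝ)*(b:ℝ) := by nlinarith
    have hLbM : (1:ℝ) ≤ (L:ℝ)*(b:ℝ)*(M:ℝ) := by nlinarith
    have hP : (0:ℝ) ≤ σ₀^2*Kg*∑ m, ‖x m‖ ^ 2 :=
      mul_nonneg (mul_nonneg hσ2 (le_of_lt hKg)) hT
    calc σ₀ ^ 2 * Kg * ∑ m, ‖x m‖ ^ 2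
        ≤ σ₀ ^ 2 * Kg * (∑ m, ‖x m‖ ^ 2) * ((L:ℝ)*(b:ℝ)*(M:ℝ)) :=
          le_mul_of_one_le_right hP hLbM
      _ = σ₀ ^ 2 * ((L : ℝ) * ((b:ℝ) * Kg * ((M : ℝ) * ∑ m, ‖x m‖ ^ 2))) := by ring
  refine ⟨main, ?_⟩
  -- invertibility
  rw [← Matrix.mulVec_injective_iff_isUnit]
  have hker : ∀ x : Fin M → ℂ, CG.mulVec x = 0 → x = 0 := by
    intro x hx
    have h0 := main x
    rw [hx] at h0
    simp only [dotProduct_zero, Complex.zero_re] at h0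
    have hT : ∑ m, ‖x m‖ ^ 2 ≤ 0 := by
      by_contra hT
      push_neg at hT
      have := mul_pos (mul_pos (pow_pos hσ₀ 2) hKg) hT
      linarith
    funext m
    have hz : ∀ m ∈ Finset.univ, ‖x m‖ ^ 2 = 0 := by
      intro m _
      have := Finset.sum_nonneg (fun m (_ : m ∈ Finset.univ) => sq_nonneg ‖x m‖)
      have hsum0 : ∑ m, ‖x m‖ ^ 2 = 0 := le_antisymm hT this
      exact (Finset.sum_eq_zero_iff_of_nonneg (fun m _ => sq_nonneg _)).1 hsum0 m (Finset.mem_univ m)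
    have := hz m (Finset.mem_univ m)
    simpa [pow_eq_zero_iff, norm_eq_zero] using this
  intro x y hxy
  have : CG.mulVec (x - y) = 0 := by
    rw [Matrix.mulVec_sub, hxy, sub_self]
  have := hker _ this
  exact sub_eq_zero.1 this
end
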